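/- Combine-and-cluster satisfies the Axiom of Transformation: if φ : X → Y satisfies α d̄_X(x,x') + (1-α) d̲_X(x,x') ≥ α d̄_Y(φ(x),φ(x')) + (1-α) d̲_Y(φ(x),φ(x')) for all x, x', then u^CO_X(x,x') ≥ u^CO_Y(φ(x),φ(x')) for all x, x'. -/
import Mathlib


/-- The cost of a chain (list of nodes): maximum dissimilarity over consecutive links. -/
def chainCost {X : Type*} (d : X → X → ℝ) : List X → ℝ
  | [] => 0
  | [_] => 0
  | a :: b :: l => max (d a b) (chainCost d (b :: l))

/-- The minimum chain cost between `x` and `x'`: infimum of costs of chains from `x` to `x'`. -/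
noncomputable def minChainCost {X : Type*} (d : X → X → ℝ) (x x' : X) : ℝ :=
  sInf { c | ∃ l : List X, l.head? = some x ∧ l.getLast? = some x' ∧ chainCost d l = c }

/-- Combine-and-cluster ultrametric. -/
noncomputable def uCO {X : Type*} (dlb dub : X → X → ℝ) (α : ℝ) : X → X → ℝ :=
  minChainCost (fun a b => α * dub a b + (1 - α) * dlb a b)


lemma chainCost_nonneg {X : Type*} (d : X → X → ℝ) (hd : ∀ a b, 0 ≤ d a b) :
    ∀ l : List X, 0 ≤ chainCost d l
  | [] => le_refl 0
  | [_] => le_refl 0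
  | a :: b :: l => le_max_of_le_left (hd a b)

lemma chainCost_map {X Y : Type*} (dX : X → X → ℝ) (dY : Y → Y → ℝ) (φ : X → Y)
    (h : ∀ a b, dY (φ a) (φ b) ≤ dX a b) :
    ∀ l : List X, chainCost dY (l.map φ) ≤ chainCost dX l
  | [] => le_refl 0
  | [_] => le_refl 0
  | a :: b :: l => by
      have := chainCost_map dX dY φ h (b :: l)
      simpa [chainCost] using max_le_max (h a b) this

theorem uCO_axiom_transformation {X Y : Type*} [Fintype X] [Fintype Y]
    (dlbX dubX : X → X → ℝ) (dlbY dubY : Y → Y → ℝ)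
    (hslX : ∀ x y, dlbX x y = dlbX y x) (hsuX : ∀ x y, dubX x y = dubX y x)
    (hbdX : ∀ x y, x ≠ y → 0 < dlbX x y ∧ dlbX x y ≤ dubX x y)
    (hdlX : ∀ x, dlbX x x = 0) (hduX : ∀ x, dubX x x = 0)
    (hslY : ∀ x y, dlbY x y = dlbY y x) (hsuY : ∀ x y, dubY x y = dubY y x)
    (hbdY : ∀ x y, x ≠ y → 0 < dlbY x y ∧ dlbY x y ≤ dubY x y)
    (hdlY : ∀ x, dlbY x x = 0) (hduY : ∀ x, dubY x x = 0)
    (α : ℝ) (hα0 : 0 ≤ α) (hα1 : α ≤ 1)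
    (φ : X → Y)
    (hred : ∀ x x', α * dubY (φ x) (φ x') + (1 - α) * dlbY (φ x) (φ x') ≤
      α * dubX x x' + (1 - α) * dlbX x x') :
    ∀ x x', uCO dlbY dubY α (φ x) (φ x') ≤ uCO dlbX dubX α x x' := by
  intro x x'
  set dX := fun a b => α * dubX a b + (1 - α) * dlbX a b with hdX
  set dY := fun a b => α * dubY a b + (1 - α) * dlbY a b with hdY
  have hdXnn : ∀ a b, 0 ≤ dX a b := by
    intro a b
    by_cases h : a = b
    · simp [hdX, h, hdlX, hduX]
    · have := hbdX a b h
      have h1 : 0 ≤ dubX a b := le_trans this.1.le this.2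
      have h2 : 0 ≤ dlbX a b := this.1.le
      have h3 : 0 ≤ 1 - α := by linarith
      show 0 ≤ α * dubX a b + (1 - α) * dlbX a b
      exact add_nonneg (mul_nonneg hα0 h1) (mul_nonneg h3 h2)
  have hdYnn : ∀ a b, 0 ≤ dY a b := by
    intro a b
    by_cases h : a = b
    · simp [hdY, h, hdlY, hduY]
    · have := hbdY a b h
      have h1 : 0 ≤ dubY a b := le_trans this.1.le this.2
      have h2 : 0 ≤ dlbY a b := this.1.le
      have h3 : 0 ≤ 1 - α := by linarith
      show 0 ≤ α * dubY a b + (1 - α) * dlbY a b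
      exact add_nonneg (mul_nonneg hα0 h1) (mul_nonneg h3 h2)
  have hbdd : BddBelow { c | ∃ l : List Y, l.head? = some (φ x) ∧
      l.getLast? = some (φ x') ∧ chainCost dY l = c } := by
    refine ⟨0, ?_⟩
    rintro c ⟨l, -, -, rfl⟩
    exact chainCost_nonneg dY hdYnn l
  have hne : { c | ∃ l : List X, l.head? = some x ∧ l.getLast? = some x' ∧
      chainCost dX l = c }.Nonempty :=
    ⟨chainCost dX [x, x'], [x, x'], rfl, rfl, rfl⟩
  refine le_csInf hne ?_
  rintro c ⟨l, hh, hg, rfl⟩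
  refine le_trans (csInf_le hbdd ⟨l.map φ, ?_, ?_, rfl⟩)
    (chainCost_map dX dY φ (fun a b => hred a b) l)
  · rw [List.head?_map, hh]; rfl
  · rw [List.getLast?_map, hg]; rfl
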